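/- arXiv:1505.00776 — 5 statements merged into one kernel-verified Lean document; each statement's English description precedes it below -/
import Mathlib

section
/- Let A be an invertible d×d matrix over the finite field F_q (q = p^n, p prime), let f(t) be the characteristic polynomial of A, and let m be the multiplicative order of A. If f(t) is reducible over F_q, then m < q^d - 1. -/
/-- Let A be an invertible d×d matrix over the finite field F_q
(q = p^n, p prime), let f(t) be the characteristic polynomial of A, and let m be
the multiplicative order of A. If f(t) is reducible over F_q, then m < q^d - 1. -/
theorem order_lt_of_charpoly_reducible
    (p n d : ℕ) (hp : p.Prime) (hn : 0 < n) (hd : 0 < d)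
    (F : Type) [Field F] [Fintype F] (hF : Fintype.card F = p ^ n)
    (A : Matrix (Fin d) (Fin d) F) (hA : IsUnit A)
    (hred : ¬ Irreducible (Matrix.charpoly A)) :
    orderOf A < (p ^ n) ^ d - 1 := by
  haveI : Nonempty (Fin d) := ⟨⟨0, hd⟩⟩
  have hq : 1 < p ^ n := Nat.one_lt_pow hn.ne' hp.one_lt
  have hqd : 1 < (p ^ n) ^ d := Nat.one_lt_pow hd.ne' hq
  have hint : IsIntegral F A := IsIntegral.of_finite F A
  set μ := minpoly F A with hμdef
  have hmon : μ.Monic := minpoly.monic hint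
  have hμ0 : μ ≠ 0 := hmon.ne_zero
  have hdvd : μ ∣ Matrix.charpoly A := Matrix.minpoly_dvd_charpoly A
  have hdegf : (Matrix.charpoly A).natDegree = d := by
    rw [Matrix.charpoly_natDegree_eq_dim, Fintype.card_fin]
  have hdegle : μ.natDegree ≤ d := by
    rw [← hdegf]
    exact Polynomial.natDegree_le_of_dvd hdvd (Matrix.charpoly_monic A).ne_zero
  -- the quotient ring R = F[X]/(μ)
  let R := AdjoinRoot μ
  let pb : PowerBasis F R := AdjoinRoot.powerBasis' hmon
  haveI : Module.Finite F R := pb.finite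
  haveI : Finite R := Module.finite_of_finite F
  haveI : Fintype R := Fintype.ofFinite R
  have hcardR : Fintype.card R = (p ^ n) ^ μ.natDegree := by
    rw [Module.card_eq_pow_finrank (K := F) (V := R), hF, pb.finrank,
      AdjoinRoot.powerBasis'_dim]
  -- the ring map to matrices
  have hnull : ∀ a ∈ Ideal.span {μ}, (Polynomial.aeval A).toRingHom a = 0 := by
    intro a ha
    obtain ⟨c, rfl⟩ := Ideal.mem_span_singleton.mp ha
    simp [hμdef, minpoly.aeval F A]
  let φ : R →+* Matrix (Fin d) (Fin d) F :=
    Ideal.Quotient.lift (Ideal.span {μ}) (Polynomial.aeval A).toRingHom hnull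
  have hφmk : ∀ g : Polynomial F, φ (AdjoinRoot.mk μ g) = Polynomial.aeval A g :=
    fun g => Ideal.Quotient.lift_mk _ _ _
  have hφ0 : ∀ z : R, φ z = 0 → z = 0 := by
    intro z hz
    obtain ⟨g, rfl⟩ := AdjoinRoot.mk_surjective z
    have hg : Polynomial.aeval A g = 0 := by rwa [hφmk] at hz
    exact AdjoinRoot.mk_eq_zero.mpr (minpoly.dvd F A hg)
  have hφinj : Function.Injective φ := by
    intro x y hxy
    have h := hφ0 (x - y) (by rw [map_sub, hxy, sub_self])
    exact sub_eq_zero.mp h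
  haveI : Nontrivial R := by
    refine ⟨0, 1, fun h01 => ?_⟩
    have : (0 : Matrix (Fin d) (Fin d) F) = 1 := by
      have := congrArg φ h01
      simp only [map_zero, map_one] at this
      exact this
    exact zero_ne_one this
  -- A has finite order, so does the root
  have hroot : φ (AdjoinRoot.root μ) = A := by
    rw [show AdjoinRoot.root μ = AdjoinRoot.mk μ Polynomial.X from rfl, hφmk,
      Polynomial.aeval_X]
  obtain ⟨m, hm0, hm⟩ : ∃ m, 0 < m ∧ A ^ m = 1 := by
    refine ⟨orderOf hA.unit, orderOf_pos hA.unit, ?_⟩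
    have h := pow_orderOf_eq_one hA.unit
    calc A ^ orderOf hA.unit
        = ((hA.unit ^ orderOf hA.unit : (Matrix (Fin d) (Fin d) F)ˣ) :
            Matrix (Fin d) (Fin d) F) := by
          rw [Units.val_pow_eq_pow_val, hA.unit_spec]
      _ = 1 := by rw [h]; rfl
  have hrm : (AdjoinRoot.root μ) ^ m = 1 := by
    apply hφinj
    rw [map_pow, hroot, map_one, hm]
  have hru : IsUnit (AdjoinRoot.root μ) := IsUnit.of_pow_eq_one hrm hm0.ne'
  -- orderOf A = orderOf of the root, which divides card Rˣ
  have horder : orderOf A = orderOf (AdjoinRoot.root μ) := by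
    rw [← hroot]
    exact orderOf_injective φ.toMonoidHom hφinj _
  haveI : Fintype Rˣ := Fintype.ofFinite _
  have hordu : orderOf (AdjoinRoot.root μ) = orderOf hru.unit := by
    conv_lhs => rw [← hru.unit_spec]
    exact orderOf_units
  have hle : orderOf A ≤ Fintype.card Rˣ := by
    rw [horder, hordu]
    exact Nat.le_of_dvd Fintype.card_pos orderOf_dvd_card
  -- units are nonzero
  have hunit_ne_zero : ∀ v : Rˣ, (v : R) ≠ 0 := by
    intro v hv
    have : IsUnit (0 : R) := hv ▸ v.isUnit
    exact zero_ne_one (isUnit_zero_iff.mp this)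
  rcases lt_or_eq_of_le hdegle with hlt | heq
  · -- deg μ < d : card Rˣ < card R = q^(deg μ) ≤ q^(d-1)
    have h1 : Fintype.card Rˣ < Fintype.card R :=
      Fintype.card_lt_of_injective_of_notMem ((↑) : Rˣ → R) Units.val_injective
        (b := 0) (by rintro ⟨v, hv⟩; exact hunit_ne_zero v hv)
    have h2 : (p ^ n) ^ μ.natDegree < (p ^ n) ^ d := Nat.pow_lt_pow_right hq hlt
    rw [hcardR] at h1
    omega
  · -- deg μ = d : μ = charpoly is reducible, giving a nonzero nonunit in R
    have hμeq : Matrix.charpoly A = μ :=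
      Polynomial.eq_of_monic_of_dvd_of_natDegree_le hmon (Matrix.charpoly_monic A)
        hdvd (by omega)
    rw [hμeq] at hred
    have hμnotunit : ¬ IsUnit μ := by
      intro h
      have := Polynomial.isUnit_iff_degree_eq_zero.mp h
      have : μ.natDegree = 0 := Polynomial.natDegree_eq_zero_iff_degree_le_zero.mpr this.le
      have hdp : 0 < μ.natDegree := minpoly.natDegree_pos hint
      omega
    rw [irreducible_iff] at hred
    push_neg at hred
    obtain ⟨g, h, hgh, hgnu, hhnu⟩ := hred hμnotunit
    have hg0 : g ≠ 0 := fun h0 => hμ0 (by rw [hgh, h0, zero_mul])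
    have hh0 : h ≠ 0 := fun h0 => hμ0 (by rw [hgh, h0, mul_zero])
    have hgd : 0 < g.natDegree := by
      rcases Nat.eq_zero_or_pos g.natDegree with h0 | h0
      · exfalso
        apply hgnu
        rw [Polynomial.eq_C_of_natDegree_eq_zero h0]
        refine Polynomial.isUnit_C.mpr (IsUnit.mk0 _ ?_)
        intro hc
        apply hg0
        rw [Polynomial.eq_C_of_natDegree_eq_zero h0, hc, map_zero]
      · exact h0
    have hhd : 0 < h.natDegree := by
      rcases Nat.eq_zero_or_pos h.natDegree with h0 | h0
      · exfalso
        apply hhnu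
        rw [Polynomial.eq_C_of_natDegree_eq_zero h0]
        refine Polynomial.isUnit_C.mpr (IsUnit.mk0 _ ?_)
        intro hc
        apply hh0
        rw [Polynomial.eq_C_of_natDegree_eq_zero h0, hc, map_zero]
      · exact h0
    have hsum : g.natDegree + h.natDegree = d := by
      rw [← heq, hgh, Polynomial.natDegree_mul hg0 hh0]
    have hglt : g.natDegree < μ.natDegree := by omega
    have hhlt : h.natDegree < μ.natDegree := by omega
    have hmkg : AdjoinRoot.mk μ g ≠ 0 := by
      rw [Ne, AdjoinRoot.mk_eq_zero]
      intro hdvd'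
      exact absurd (Polynomial.natDegree_le_of_dvd hdvd' hg0) (by omega)
    have hmkh : AdjoinRoot.mk μ h ≠ 0 := by
      rw [Ne, AdjoinRoot.mk_eq_zero]
      intro hdvd'
      exact absurd (Polynomial.natDegree_le_of_dvd hdvd' hh0) (by omega)
    have hmul : AdjoinRoot.mk μ g * AdjoinRoot.mk μ h = 0 := by
      rw [← map_mul, ← hgh, AdjoinRoot.mk_self]
    have hmkg_nu : ¬ IsUnit (AdjoinRoot.mk μ g) := by
      rintro ⟨v, hv⟩
      apply hmkh
      calc AdjoinRoot.mk μ h = ↑v⁻¹ * (↑v * AdjoinRoot.mk μ h) := by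
            rw [← mul_assoc, Units.inv_mul, one_mul]
        _ = ↑v⁻¹ * (AdjoinRoot.mk μ g * AdjoinRoot.mk μ h) := by rw [hv]
        _ = 0 := by rw [hmul, mul_zero]
    -- units avoid both 0 and mk g, so card Rˣ ≤ card R - 2
    classical
    have hsub : (Finset.univ.image ((↑) : Rˣ → R)) ⊆
        Finset.univ \ {0, AdjoinRoot.mk μ g} := by
      intro x hx
      obtain ⟨v, _, rfl⟩ := Finset.mem_image.mp hx
      rw [Finset.mem_sdiff]
      refine ⟨Finset.mem_univ _, ?_⟩
      simp only [Finset.mem_insert, Finset.mem_singleton]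
      push_neg
      exact ⟨hunit_ne_zero v, fun hvg => hmkg_nu (hvg ▸ v.isUnit)⟩
    have hcard2 : ({0, AdjoinRoot.mk μ g} : Finset R).card = 2 := by
      rw [Finset.card_insert_of_notMem (by simpa using hmkg.symm), Finset.card_singleton]
    have hcardRu : Fintype.card Rˣ ≤ Fintype.card R - 2 := by
      have h1 : (Finset.univ.image ((↑) : Rˣ → R)).card = Fintype.card Rˣ := by
        rw [Finset.card_image_of_injective _ Units.val_injective, Finset.card_univ]
      have h2 := Finset.card_le_card hsub
      rw [h1, Finset.card_sdiff_of_subset (Finset.subset_univ _), Finset.card_univ, hcard2] at h2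
      exact h2
    rw [hcardR, heq] at hcardRu
    omega
end

section
/- Let A be an invertible d×d matrix over the finite field F_q (q = p^n, p prime) whose characteristic polynomial f(t) is irreducible over F_q, and let m be the multiplicative order of A. Then: (a) p does not divide m; (b) d equals the multiplicative order of q modulo m; and (c) rank(A^l - E) = d (i.e. A^l - E is invertible) for every positive integer l < m dividing m. -/
set_option maxHeartbeats 1000000


/-- If the characteristic polynomial of an invertible d×d matrix A over
F_q (q = p^n) is irreducible, and m is the multiplicative order of A, then
(a) p ∤ m, (b) d is the multiplicative order of q modulo m, and
(c) rank(A^l - E) = d for every positive l < m dividing m. -/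
theorem charpoly_irreducible_necessary_conditions
    (p n d : ℕ) (hp : p.Prime) (hn : 0 < n)
    (F : Type) [Field F] [Fintype F] (hF : Fintype.card F = p ^ n)
    (A : Matrix (Fin d) (Fin d) F) (hA : IsUnit A)
    (m : ℕ) (hm : m = orderOf A)
    (hirr : Irreducible (Matrix.charpoly A)) :
    ¬ p ∣ m ∧
    IsLeast {e : ℕ | 0 < e ∧ m ∣ (p ^ n) ^ e - 1} d ∧
    ∀ l : ℕ, 0 < l → l < m → l ∣ m → (A ^ l - 1).rank = d := by
  classical
  set f := Matrix.charpoly A with hf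
  have hmonic : f.Monic := Matrix.charpoly_monic A
  have hfdeg : f.natDegree = d := by
    rw [hf, Matrix.charpoly_natDegree_eq_dim, Fintype.card_fin]
  have hd : 0 < d := by
    rw [← hfdeg]
    exact hirr.natDegree_pos
  haveI : Fact (Irreducible f) := ⟨hirr⟩
  haveI : NeZero d := ⟨hd.ne'⟩
  -- the field K = F[X]/(f)
  set K := AdjoinRoot f with hK
  set α : K := AdjoinRoot.root f with hα
  have hf0 : f ≠ 0 := hmonic.ne_zero
  let pb : PowerBasis F K := AdjoinRoot.powerBasis hf0
  haveI : Module.Finite F K := Module.Finite.of_basis pb.basis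
  haveI : Finite K := Module.finite_of_finite F
  haveI : Fintype K := Fintype.ofFinite K
  have hcardK : Fintype.card K = (p ^ n) ^ d := by
    have hdim : pb.dim = d := hfdeg
    rw [Module.card_fintype pb.basis, hF, Fintype.card_fin, hdim]
  -- the algebra hom K → Matrix
  let φ : K →ₐ[F] Matrix (Fin d) (Fin d) F :=
    Ideal.Quotient.liftₐ (Ideal.span {f}) (Polynomial.aeval A) (by
      intro a ha
      obtain ⟨b, rfl⟩ := Ideal.mem_span_singleton'.mp ha
      rw [map_mul]
      have : Polynomial.aeval A f = 0 := Matrix.aeval_self_charpoly A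
      rw [this, mul_zero])
  have hφα : φ α = A := by
    show φ (AdjoinRoot.mk f Polynomial.X) = A
    show Polynomial.aeval A Polynomial.X = A
    simp
  have hφinj : Function.Injective φ := by
    exact RingHom.injective (φ.toRingHom)
  have hmα : m = orderOf α := by
    rw [hm, ← hφα]
    exact orderOf_injective φ.toRingHom.toMonoidHom hφinj α
  have hα0 : α ≠ 0 := by
    intro h
    have hA0 : A = 0 := by rw [← hφα, h, map_zero]
    exact hA.ne_zero hA0
  have hcard1 : 1 < Fintype.card K := Fintype.one_lt_card
  have hαfin : IsOfFinOrder α :=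
    isOfFinOrder_iff_pow_eq_one.mpr
      ⟨Fintype.card K - 1, by omega, FiniteField.pow_card_sub_one_eq_one α hα0⟩
  have hmpos : 0 < m := by rw [hmα]; exact hαfin.orderOf_pos
  have hmdvd : m ∣ (p ^ n) ^ d - 1 := by
    rw [← hcardK, hmα]
    exact orderOf_dvd_of_pow_eq_one (FiniteField.pow_card_sub_one_eq_one α hα0)
  -- char p on K
  have hringchar : ringChar F = p := by
    obtain ⟨n', hp', hcard⟩ := FiniteField.card F (ringChar F)
    rw [hF] at hcard
    have : p ∣ ringChar F ^ (n' : ℕ) := by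
      rw [← hcard]; exact dvd_pow_self p hn.ne'
    have := (Nat.Prime.dvd_of_dvd_pow hp this)
    exact ((Nat.prime_dvd_prime_iff_eq hp hp').mp this).symm
  haveI : CharP F p := by rw [← hringchar]; exact ringChar.charP F
  haveI : CharP K p := charP_of_injective_algebraMap (algebraMap F K).injective p
  haveI : ExpChar K p := ExpChar.prime hp
  refine ⟨?_, ⟨⟨hd, hmdvd⟩, ?_⟩, ?_⟩
  · -- (a)
    intro hpm
    have h1 : p ∣ (p ^ n) ^ d - 1 := hpm.trans hmdvd
    have h2 : p ∣ (p ^ n) ^ d := dvd_pow (dvd_pow_self p hn.ne') hd.ne'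
    have h4 : 1 ≤ (p ^ n) ^ d := Nat.one_le_pow _ _ (Nat.pow_pos hp.pos)
    have h3 := Nat.dvd_sub h2 h1
    rw [show (p ^ n) ^ d - ((p ^ n) ^ d - 1) = 1 by omega] at h3
    have := Nat.le_of_dvd one_pos h3
    have := hp.one_lt
    omega
  · -- (b) lower bound
    rintro e ⟨he, hme⟩
    have hq1 : 1 < p ^ n := Nat.one_lt_pow hn.ne' hp.one_lt
    have hN1 : 1 < (p ^ n) ^ e := Nat.one_lt_pow he.ne' hq1
    -- the q^e-power Frobenius as an F-algebra endomorphism of K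
    let ψ : K →ₐ[F] K :=
      { iterateFrobenius K p (n * e) with
        commutes' := fun c => by
          show (algebraMap F K c) ^ p ^ (n * e) = algebraMap F K c
          rw [← map_pow]
          congr 1
          rw [pow_mul, ← hF]
          exact FiniteField.pow_card_pow e c }
    have hψ : ∀ x : K, ψ x = x ^ (p ^ n) ^ e := fun x => by
      show x ^ p ^ (n * e) = x ^ (p ^ n) ^ e
      rw [pow_mul]
    -- every x : K satisfies x ^ (p^n)^e = x
    have hsub : AlgHom.equalizer ψ (AlgHom.id F K) = ⊤ := by
      rw [eq_top_iff, ← AdjoinRoot.adjoinRoot_eq_top (f := f)]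
      apply Algebra.adjoin_le
      rintro x hx
      rw [Set.mem_singleton_iff] at hx
      subst hx
      rw [SetLike.mem_coe, AlgHom.mem_equalizer, hψ]
      show α ^ (p ^ n) ^ e = α
      have h1 : α ^ ((p ^ n) ^ e - 1) = 1 :=
        orderOf_dvd_iff_pow_eq_one.mp (hmα ▸ hme)
      calc α ^ (p ^ n) ^ e = α ^ ((p ^ n) ^ e - 1 + 1) := by congr 1; omega
        _ = α ^ ((p ^ n) ^ e - 1) * α := by rw [pow_succ]
        _ = α := by rw [h1, one_mul]
    have key : ∀ x : K, x ^ (p ^ n) ^ e = x := fun x => by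
      have hx : x ∈ AlgHom.equalizer ψ (AlgHom.id F K) := hsub ▸ Algebra.mem_top
      rw [AlgHom.mem_equalizer, hψ] at hx
      exact hx
    -- hence card K ≤ (p^n)^e
    set N := (p ^ n) ^ e with hN
    set g : Polynomial K := Polynomial.X ^ N - Polynomial.X with hg
    have hgdeg : g.natDegree = N := by
      rw [hg, Polynomial.natDegree_sub_eq_left_of_natDegree_lt, Polynomial.natDegree_X_pow]
      rw [Polynomial.natDegree_X_pow, Polynomial.natDegree_X]
      exact hN1
    have hg0 : g ≠ 0 := fun h => by
      rw [h, Polynomial.natDegree_zero] at hgdeg; omega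
    have hroots : ∀ x : K, x ∈ g.roots := fun x => by
      rw [Polynomial.mem_roots hg0]
      show Polynomial.eval x g = 0
      simp [hg, key x]
    have hcount : Fintype.card K ≤ N := by
      calc Fintype.card K = (Finset.univ : Finset K).card := Finset.card_univ.symm
        _ ≤ g.roots.toFinset.card :=
            Finset.card_le_card (fun x _ => Multiset.mem_toFinset.mpr (hroots x))
        _ ≤ Multiset.card g.roots := g.roots.toFinset_card_le
        _ ≤ g.natDegree := Polynomial.card_roots' g
        _ = N := hgdeg
    rw [hcardK] at hcount
    exact (Nat.pow_le_pow_iff_right hq1).mp hcount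
  · -- (c)
    intro l hl hlm hldvd
    have hne : α ^ l - 1 ≠ 0 := by
      intro h
      have : α ^ l = 1 := by rwa [sub_eq_zero] at h
      have := orderOf_le_of_pow_eq_one hl this
      omega
    have : IsUnit (A ^ l - 1) := by
      have hu : IsUnit (α ^ l - 1) := hne.isUnit
      have : φ (α ^ l - 1) = A ^ l - 1 := by
        rw [map_sub, map_pow, hφα, map_one]
      rw [← this]
      exact hu.map φ
    rw [Matrix.rank_of_isUnit _ this, Fintype.card_fin]
end

section
/- Let A be an invertible d×d matrix over the finite field F_q (q = p^n, p prime) with characteristic polynomial f(t), and let m be the multiplicative order of A. If (a) p does not divide m, (b) d equals the multiplicative order of q modulo m, and (c) rank(A^l - E) = d for every positive integer l < m dividing m, then f(t) is irreducible over F_q. -/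
open Polynomial Matrix

lemma eval_charpoly_det {d : ℕ} {K : Type} [CommRing K] (M : Matrix (Fin d) (Fin d) K) (r : K) :
    (M.charpoly).eval r = (r • (1 : Matrix (Fin d) (Fin d) K) - M).det := by
  rw [Matrix.charpoly, ← Polynomial.coe_evalRingHom, RingHom.map_det]
  congr 1
  ext i j
  by_cases h : i = j
  · subst h; simp [charmatrix_apply_eq]
  · simp [charmatrix_apply_ne _ _ _ h, Matrix.one_apply_ne h]

lemma mulVec_injective_of_rank {d : ℕ} {F : Type} [Field F] (B : Matrix (Fin d) (Fin d) F)
    (h : B.rank = d) {v : Fin d → F} (hv : B.mulVec v = 0) : v = 0 := by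
  have hrn := LinearMap.finrank_range_add_finrank_ker B.mulVecLin
  rw [Module.finrank_fintype_fun_eq_card, Fintype.card_fin] at hrn
  have hr : B.rank = Module.finrank F (LinearMap.range B.mulVecLin) := rfl
  have hker : Module.finrank F (LinearMap.ker B.mulVecLin) = 0 := by omega
  have hbot : LinearMap.ker B.mulVecLin = ⊥ := Submodule.finrank_eq_zero.mp hker
  have hmem : v ∈ LinearMap.ker B.mulVecLin := by simpa [Matrix.mulVecLin] using hv
  rw [hbot] at hmem
  simpa using hmem

/-- Let A be an invertible d×d matrix over F_q (q = p^n, p prime) with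
characteristic polynomial f and multiplicative order m. If (a) p ∤ m,
(b) d is the multiplicative order of q modulo m, and
(c) rank(A^l - E) = d for every positive l < m dividing m,
then f is irreducible over F_q. -/
theorem charpoly_irreducible_sufficient_conditions
    (p n d : ℕ) (hp : p.Prime) (hn : 0 < n)
    (F : Type) [Field F] [Fintype F] (hF : Fintype.card F = p ^ n)
    (A : Matrix (Fin d) (Fin d) F) (hA : IsUnit A)
    (m : ℕ) (hm : m = orderOf A)
    (ha : ¬ p ∣ m)
    (hb : IsLeast {e : ℕ | 0 < e ∧ m ∣ (p ^ n) ^ e - 1} d)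
    (hc : ∀ l : ℕ, 0 < l → l < m → l ∣ m → (A ^ l - 1).rank = d) :
    Irreducible (Matrix.charpoly A) := by
  obtain ⟨⟨hd0, hdvd⟩, hleast⟩ := hb
  have hm0 : 0 < m := by
    obtain ⟨u, rfl⟩ := hA
    rw [hm, orderOf_units]
    exact orderOf_pos u
  have hAm : A ^ m = 1 := by rw [hm]; exact pow_orderOf_eq_one A
  set f := Matrix.charpoly A with hf
  have hfmonic : f.Monic := Matrix.charpoly_monic A
  have hfdeg : f.natDegree = d := by
    rw [hf, Matrix.charpoly_natDegree_eq_dim, Fintype.card_fin]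
  have hfnu : ¬ IsUnit f := by
    apply Polynomial.not_isUnit_of_natDegree_pos
    omega
  obtain ⟨g, hgm, hgi, hgd⟩ := f.exists_monic_irreducible_factor hfnu
  haveI : Fact (Irreducible g) := ⟨hgi⟩
  set K := AdjoinRoot g with hK
  haveI : Module.Finite F K := (AdjoinRoot.powerBasis' hgm).finite
  haveI : Finite K := Module.finite_of_finite F
  haveI : Fintype K := Fintype.ofFinite K
  have hfinrank : Module.finrank F K = g.natDegree := (AdjoinRoot.powerBasis' hgm).finrank
  have hcardK : Fintype.card K = (p ^ n) ^ g.natDegree := by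
    rw [Module.card_eq_pow_finrank (K := F) (V := K), hF, hfinrank]
  set e := g.natDegree with he
  have he0 : 0 < e := hgi.natDegree_pos
  set φ := algebraMap F K with hφ
  set Φ := φ.mapMatrix (m := Fin d) with hΦ
  set α := AdjoinRoot.root g with hα
  have hgα : Polynomial.aeval α g = 0 := by
    rw [AdjoinRoot.aeval_eq]
    exact AdjoinRoot.mk_self
  have hfα : Polynomial.aeval α f = 0 := by
    obtain ⟨c, hcf⟩ := hgd
    rw [hcf, _root_.map_mul, hgα, zero_mul]
  set A' := Φ A with hA'
  have hA'map : A' = A.map φ := rfl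
  have hdet0 : (α • (1 : Matrix (Fin d) (Fin d) K) - A').det = 0 := by
    rw [← eval_charpoly_det, hA'map, Matrix.charpoly_map, Polynomial.eval_map,
      ← Polynomial.aeval_def, hfα]
  obtain ⟨v, hv0, hv⟩ := (Matrix.exists_mulVec_eq_zero_iff).mpr hdet0
  have heig : A'.mulVec v = α • v := by
    rw [Matrix.sub_mulVec, sub_eq_zero] at hv
    rw [← hv, Matrix.smul_mulVec, Matrix.one_mulVec]
  have heigpow : ∀ l : ℕ, (A' ^ l).mulVec v = α ^ l • v := by
    intro l
    induction l with
    | zero => simp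
    | succ k ih =>
        rw [pow_succ', pow_succ', ← Matrix.mulVec_mulVec, ih, Matrix.mulVec_smul, heig,
          smul_smul, mul_comm]
  have hA'm : A' ^ m = 1 := by rw [hA', ← map_pow, hAm, _root_.map_one]
  have hαm : α ^ m = 1 := by
    have h1 : α ^ m • v = v := by rw [← heigpow, hA'm, Matrix.one_mulVec]
    obtain ⟨i, hi⟩ := Function.ne_iff.mp hv0
    have h2 : α ^ m * v i = v i := congrFun h1 i
    have := mul_right_cancel₀ (by simpa using hi) (h2.trans (one_mul (v i)).symm)
    exact this
  set l := orderOf α with hl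
  have hl0 : 0 < l := (isOfFinOrder_iff_pow_eq_one.mpr ⟨m, hm0, hαm⟩).orderOf_pos
  have hldvd : l ∣ m := orderOf_dvd_of_pow_eq_one hαm
  have hlm : l = m := by
    by_contra hne
    have hlt : l < m := lt_of_le_of_ne (Nat.le_of_dvd hm0 hldvd) hne
    have hrank := hc l hl0 hlt hldvd
    have hαl : α ^ l = 1 := pow_orderOf_eq_one α
    have hkill : (Φ (A ^ l - 1)).mulVec v = 0 := by
      rw [map_sub, map_pow, _root_.map_one, ← hA', Matrix.sub_mulVec, heigpow, hαl, one_smul,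
        Matrix.one_mulVec, sub_self]
    have hdet : (Φ (A ^ l - 1)).det = 0 := by
      rw [← Matrix.exists_mulVec_eq_zero_iff]
      exact ⟨v, hv0, hkill⟩
    rw [hΦ, ← RingHom.map_det] at hdet
    have hdF : (A ^ l - 1).det = 0 :=
      (map_eq_zero_iff φ (φ.injective)).mp hdet
    obtain ⟨w, hw0, hw⟩ := (Matrix.exists_mulVec_eq_zero_iff).mpr hdF
    exact hw0 (mulVec_injective_of_rank _ hrank hw)
  have hαunit : IsUnit α := by
    apply IsUnit.of_mul_eq_one (a := α) (α ^ (m - 1))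
    rw [← pow_succ', Nat.sub_add_cancel hm0]
    exact hαm
  obtain ⟨u, hu⟩ := hαunit
  have hordu : orderOf u = m := by rw [← hlm, hl, ← hu, orderOf_units]
  have hmdvd : m ∣ (p ^ n) ^ e - 1 := by
    have h3 : orderOf u ∣ Fintype.card Kˣ := orderOf_dvd_card
    rw [hordu, Fintype.card_units, hcardK] at h3
    exact h3
  have hde : d ≤ e := hleast ⟨he0, hmdvd⟩
  have hed : e ≤ d := by
    have := Polynomial.natDegree_le_of_dvd hgd hfmonic.ne_zero
    omega
  obtain ⟨c, hcf⟩ := hgd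
  have hc0 : c ≠ 0 := by
    intro h
    rw [h, mul_zero] at hcf
    exact hfmonic.ne_zero hcf
  have hdegc : c.natDegree = 0 := by
    have := Polynomial.natDegree_mul hgm.ne_zero hc0
    rw [← hcf, hfdeg] at this
    omega
  have hcmonic : c.Monic := by
    have h4 := hfmonic
    rw [hcf] at h4
    exact hgm.of_mul_monic_left h4
  have hc1 : c = 1 := Polynomial.eq_one_of_monic_natDegree_zero hcmonic hdegc
  rw [hf] at hcf ⊢
  rw [hcf, hc1, mul_one]
  exact hgi
end

section
/- Let f(t) be a monic polynomial of degree d over the finite field F_q (q = p^n, p prime) with nonzero constant term, let [f] be its companion matrix, and let m = ord f(t) be the multiplicative order of [f]. Then f(t) is irreducible over F_q if and only if: (a) p does not divide m, (b) d equals the multiplicative order of q modulo m, and (c) rank([f]^l - E) = d for every positive integer l < m dividing m. -/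
/-- The companion matrix of a monic polynomial
`f = a_0 + a_1 t + ... + a_{d-1} t^{d-1} + t^d`: the d×d matrix with 1's on the
superdiagonal, last row `(-a_0, ..., -a_{d-1})`, and 0's elsewhere. -/
def companionMatrix {F : Type} [Field F] (d : ℕ) (f : Polynomial F) :
    Matrix (Fin d) (Fin d) F :=
  Matrix.of fun i j =>
    if (i : ℕ) = d - 1 then -f.coeff (j : ℕ)
    else if (j : ℕ) = (i : ℕ) + 1 then 1 else 0

open Polynomial Matrix

variable {F : Type} [Field F] {f : Polynomial F}

lemma root_pow_natDegree (hmonic : f.Monic) :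
    AdjoinRoot.root f ^ f.natDegree
      = ∑ i : Fin f.natDegree, (-(f.coeff i)) • AdjoinRoot.root f ^ (i : ℕ) := by
  have h0 : (Polynomial.aeval (AdjoinRoot.root f)) f = 0 := by
    rw [Polynomial.aeval_def, AdjoinRoot.algebraMap_eq]
    exact AdjoinRoot.eval₂_root f
  rw [Polynomial.aeval_eq_sum_range, Finset.sum_range_succ, hmonic.coeff_natDegree,
    one_smul] at h0
  have h1 := eq_neg_of_add_eq_zero_right h0
  rw [h1, Fin.sum_univ_eq_sum_range (fun i => (-(f.coeff i)) • AdjoinRoot.root f ^ i),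
    ← Finset.sum_neg_distrib]
  exact Finset.sum_congr rfl fun i _ => by rw [neg_smul]

lemma companion_eq (hmonic : f.Monic) :
    LinearMap.toMatrixAlgEquiv (AdjoinRoot.powerBasis' hmonic).basis
      (LinearMap.mulLeft F (AdjoinRoot.root f))
      = (companionMatrix f.natDegree f)ᵀ := by
  ext i j
  set d := f.natDegree with hd
  set B := (AdjoinRoot.powerBasis' hmonic).basis with hB
  have hBp : ∀ i : Fin (AdjoinRoot.powerBasis' hmonic).dim, B i = AdjoinRoot.root f ^ (i : ℕ) := fun i =>
    (AdjoinRoot.powerBasis' hmonic).basis_eq_pow i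
  rw [LinearMap.toMatrixAlgEquiv_apply, LinearMap.mulLeft_apply, hBp j]
  change _ = Matrix.of (fun i j : Fin (AdjoinRoot.powerBasis' hmonic).dim =>
    if (i : ℕ) = d - 1 then -f.coeff (j : ℕ) else if (j : ℕ) = (i : ℕ) + 1 then 1 else 0) j i
  rcases eq_or_ne ((j : ℕ) + 1) d with hj | hj
  · have h2 : AdjoinRoot.root f * AdjoinRoot.root f ^ (j : ℕ)
        = AdjoinRoot.root f ^ d := by rw [← hj, pow_succ']
    rw [h2, root_pow_natDegree hmonic]
    have h3 : (∑ k : Fin d, (-(f.coeff k)) • AdjoinRoot.root f ^ (k:ℕ))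
        = ∑ k : Fin (AdjoinRoot.powerBasis' hmonic).dim, (-(f.coeff k)) • B k :=
      Finset.sum_congr rfl fun k _ => by rw [hBp k]
    rw [h3]
    simp only [map_sum, _root_.map_smul, Module.Basis.repr_self]
    rw [Finsupp.finset_sum_apply]
    simp only [Finsupp.smul_single, smul_eq_mul, mul_one, Finsupp.single_apply]
    simp only [Finset.sum_ite_eq']
    simp only [Finset.mem_univ, if_true, companionMatrix, Matrix.of_apply]
    have hjd : (j : ℕ) = d - 1 := by omega
    rw [if_pos hjd]
  · have hjlt : (j : ℕ) + 1 < d := lt_of_le_of_ne j.isLt hj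
    have h2 : AdjoinRoot.root f * AdjoinRoot.root f ^ (j : ℕ) = B ⟨(j:ℕ)+1, hjlt⟩ := by
      rw [hBp ⟨(j:ℕ)+1, hjlt⟩]; exact (pow_succ' _ _).symm
    rw [h2, Module.Basis.repr_self, Finsupp.single_apply]
    simp only [companionMatrix, Matrix.of_apply]
    have hjd : (j : ℕ) ≠ d - 1 := by omega
    rw [if_neg hjd]
    by_cases h : (i : ℕ) = (j : ℕ) + 1
    · rw [if_pos (Fin.ext (by simpa using h.symm)), if_pos h]
    · rw [if_neg (fun hc => h (congrArg Fin.val hc.symm)), if_neg h]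

lemma companion_pow_iff (hmonic : f.Monic)
    (hco : LinearMap.toMatrixAlgEquiv (AdjoinRoot.powerBasis' hmonic).basis
      (LinearMap.mulLeft F (AdjoinRoot.root f)) = (companionMatrix f.natDegree f)ᵀ)
    (k : ℕ) :
    companionMatrix f.natDegree f ^ k = 1 ↔ AdjoinRoot.root f ^ k = 1 := by
  set B := (AdjoinRoot.powerBasis' hmonic).basis
  set E := LinearMap.toMatrixAlgEquiv B
  have h1 : companionMatrix f.natDegree f ^ k = 1
      ↔ (companionMatrix f.natDegree f)ᵀ ^ k = 1 := by
    rw [← Matrix.transpose_pow]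
    constructor
    · intro h; rw [h, Matrix.transpose_one]
    · intro h
      have := congrArg Matrix.transpose h
      rwa [Matrix.transpose_transpose, Matrix.transpose_one] at this
  rw [h1, ← hco]
  erw [← map_pow E]
  rw [LinearMap.pow_mulLeft]
  constructor
  · intro h
    have h2 : LinearMap.mulLeft F (AdjoinRoot.root f ^ k) = (1 : Module.End F (AdjoinRoot f)) := by
      apply E.injective; rw [h, _root_.map_one]; rfl
    have := congrArg (fun φ : Module.End F (AdjoinRoot f) => φ 1) h2
    simpa using this
  · intro h; rw [h, LinearMap.mulLeft_one]; exact _root_.map_one E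

set_option maxHeartbeats 1000000 in
lemma companion_rank_iff (hmonic : f.Monic)
    (hco : LinearMap.toMatrixAlgEquiv (AdjoinRoot.powerBasis' hmonic).basis
      (LinearMap.mulLeft F (AdjoinRoot.root f)) = (companionMatrix f.natDegree f)ᵀ)
    (l : ℕ) :
    ((companionMatrix f.natDegree f) ^ l - 1).rank = f.natDegree
      ↔ IsUnit (AdjoinRoot.root f ^ l - 1) := by
  set B := (AdjoinRoot.powerBasis' hmonic).basis
  set E := LinearMap.toMatrixAlgEquiv B
  haveI : FiniteDimensional F (AdjoinRoot f) := Module.Finite.of_basis B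
  have hfr : Module.finrank F (AdjoinRoot f) = f.natDegree :=
    (AdjoinRoot.powerBasis' hmonic).finrank
  have hx : LinearMap.mulLeft F (AdjoinRoot.root f ^ l - 1)
      = LinearMap.mulLeft F (AdjoinRoot.root f) ^ l - 1 := by
    rw [LinearMap.pow_mulLeft]
    exact LinearMap.ext fun y => by simp [LinearMap.mulLeft_apply, sub_mul]
  have hEx : E (LinearMap.mulLeft F (AdjoinRoot.root f ^ l - 1))
      = (companionMatrix f.natDegree f ^ l - 1)ᵀ := by
    rw [hx, map_sub, map_pow, _root_.map_one, hco]
    exact (by rw [Matrix.transpose_sub, Matrix.transpose_pow, Matrix.transpose_one] :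
      (companionMatrix f.natDegree f ^ l - 1)ᵀ = (companionMatrix f.natDegree f)ᵀ ^ l - 1).symm
  have hrk : (companionMatrix f.natDegree f ^ l - 1).rank
      = (E (LinearMap.mulLeft F (AdjoinRoot.root f ^ l - 1))).rank := by
    rw [hEx, Matrix.rank_transpose]
    rfl
  have hE : E (LinearMap.mulLeft F (AdjoinRoot.root f ^ l - 1))
      = LinearMap.toMatrix B B (LinearMap.mulLeft F (AdjoinRoot.root f ^ l - 1)) := by
    simp only [E, LinearMap.toMatrixAlgEquiv, AlgEquiv.ofLinearEquiv_apply]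
  have htl : Matrix.toLin B B
        (LinearMap.toMatrix B B (LinearMap.mulLeft F (AdjoinRoot.root f ^ l - 1)))
      = LinearMap.mulLeft F (AdjoinRoot.root f ^ l - 1) :=
    Matrix.toLin_toMatrix B B _
  have hrk2 : (E (LinearMap.mulLeft F (AdjoinRoot.root f ^ l - 1))).rank
      = Module.finrank F
          (LinearMap.range (LinearMap.mulLeft F (AdjoinRoot.root f ^ l - 1))) := by
    rw [hE, Matrix.rank_eq_finrank_range_toLin _ B B, htl]
  rw [hrk, hrk2]
  constructor
  · intro h
    have htop : LinearMap.range (LinearMap.mulLeft F (AdjoinRoot.root f ^ l - 1)) = ⊤ :=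
      Submodule.eq_top_of_finrank_eq (by rw [h, hfr])
    obtain ⟨y, hy⟩ := (LinearMap.range_eq_top.mp htop) 1
    exact IsUnit.of_mul_eq_one y (by rwa [LinearMap.mulLeft_apply] at hy)
  · rintro ⟨u, hu⟩
    have htop : LinearMap.range (LinearMap.mulLeft F (AdjoinRoot.root f ^ l - 1)) = ⊤ :=
      LinearMap.range_eq_top.mpr fun z =>
        ⟨(↑u⁻¹ : AdjoinRoot f) * z, by
          rw [LinearMap.mulLeft_apply, ← hu, Units.mul_inv_cancel_left]⟩
    rw [htop, finrank_top, hfr]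

lemma isUnit_root (hmonic : f.Monic) (hc0 : f.coeff 0 ≠ 0) :
    IsUnit (AdjoinRoot.root f) := by
  have h0 : (Polynomial.aeval (AdjoinRoot.root f)) f = 0 := by
    rw [Polynomial.aeval_def, AdjoinRoot.algebraMap_eq]
    exact AdjoinRoot.eval₂_root f
  have hf : f.divX * X + C (f.coeff 0) = f := Polynomial.divX_mul_X_add f
  have h1 : (aeval (AdjoinRoot.root f)) f.divX * AdjoinRoot.root f
      + algebraMap F (AdjoinRoot f) (f.coeff 0) = 0 := by
    have h1 := congrArg (aeval (AdjoinRoot.root f)) hf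
    rwa [map_add, _root_.map_mul, Polynomial.aeval_X, Polynomial.aeval_C, h0] at h1
  have h2 : AdjoinRoot.root f * (aeval (AdjoinRoot.root f)) f.divX
      = - algebraMap F (AdjoinRoot f) (f.coeff 0) := by
    rw [mul_comm]
    exact eq_neg_of_add_eq_zero_left h1
  apply IsUnit.of_mul_eq_one
    ((aeval (AdjoinRoot.root f)) f.divX * algebraMap F (AdjoinRoot f) (-(f.coeff 0)⁻¹))
  rw [← mul_assoc, h2, map_neg, neg_mul_neg, ← _root_.map_mul, mul_inv_cancel₀ hc0, _root_.map_one]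

/-- Let f be a monic polynomial of degree d over F_q (q = p^n) with
nonzero constant term, [f] its companion matrix, m = ord f = m.o.[f]. Then f is
irreducible over F_q iff (a) p ∤ m, (b) d is the multiplicative order of q modulo m,
and (c) rank([f]^l - E) = d for every positive l < m dividing m. -/
theorem irreducible_iff_order_conditions
    (p n d : ℕ) (hp : p.Prime) (hn : 0 < n)
    (F : Type) [Field F] [Fintype F] (hF : Fintype.card F = p ^ n)
    (f : Polynomial F) (hmonic : f.Monic) (hdeg : f.natDegree = d)
    (hc0 : f.coeff 0 ≠ 0)
    (m : ℕ) (hm : m = orderOf (companionMatrix d f)) :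
    Irreducible f ↔
      (¬ p ∣ m ∧
       IsLeast {e : ℕ | 0 < e ∧ m ∣ (p ^ n) ^ e - 1} d ∧
       ∀ l : ℕ, 0 < l → l < m → l ∣ m → (companionMatrix d f ^ l - 1).rank = d) := by
  subst hdeg
  subst hm
  set q := p ^ n with hq
  rcases Nat.eq_zero_or_pos f.natDegree with hd0 | hd
  · constructor
    · intro hirr
      rw [hmonic.natDegree_eq_zero.mp hd0] at hirr
      exact absurd hirr not_irreducible_one
    · rintro ⟨-, ⟨⟨h0, -⟩, -⟩, -⟩
      omega
  · have hco := companion_eq hmonic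
    have hpow := companion_pow_iff hmonic hco
    have hranki := companion_rank_iff hmonic hco
    haveI : Fintype (AdjoinRoot f) :=
      Module.fintypeOfFintype (AdjoinRoot.powerBasis' hmonic).basis
    have horder : orderOf (companionMatrix f.natDegree f) = orderOf (AdjoinRoot.root f) :=
      orderOf_eq_orderOf_iff.mpr hpow
    obtain ⟨u, hu⟩ := isUnit_root hmonic hc0
    have hfinord : IsOfFinOrder (AdjoinRoot.root f) := by
      rw [← hu]
      exact orderOf_pos_iff.mp (by rw [orderOf_units]; exact orderOf_pos u)
    have hmpos : 0 < orderOf (AdjoinRoot.root f) := orderOf_pos_iff.mpr hfinord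
    have hcardA : Fintype.card (AdjoinRoot f) = q ^ f.natDegree := by
      rw [Module.card_fintype (AdjoinRoot.powerBasis' hmonic).basis, hF, Fintype.card_fin]
      rfl
    have hq1 : 1 < q := Nat.one_lt_pow hn.ne' hp.one_lt
    rw [horder]
    constructor
    · intro hirr
      haveI : Fact (Irreducible f) := ⟨hirr⟩
      have hroot_ne : AdjoinRoot.root f ≠ 0 := by
        rw [← hu]; exact u.ne_zero
      have hdvd : orderOf (AdjoinRoot.root f) ∣ q ^ f.natDegree - 1 := by
        apply orderOf_dvd_of_pow_eq_one
        rw [← hcardA]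
        exact FiniteField.pow_card_sub_one_eq_one _ hroot_ne
      have hqd1 : 0 < q ^ f.natDegree := Nat.pow_pos (by omega)
      refine ⟨?_, ⟨⟨hd, hdvd⟩, ?_⟩, ?_⟩
      · -- p ∤ m
        intro hpm
        have h1 : p ∣ q ^ f.natDegree :=
          hq ▸ dvd_pow (dvd_pow_self p hn.ne') hd.ne'
        have h2 : p ∣ q ^ f.natDegree - 1 := hpm.trans hdvd
        have h3 : p ∣ 1 := by
          have := Nat.dvd_sub h1 h2
          rwa [Nat.sub_sub_self (by omega)] at this
        exact hp.one_lt.ne' (Nat.dvd_one.mp h3)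
      · -- lower bound
        rintro e ⟨he, hedvd⟩
        -- char p facts
        haveI : Fact p.Prime := ⟨hp⟩
        have hpF : (p : F) = 0 := by
          have h := FiniteField.cast_card_eq_zero F
          rw [hF, Nat.cast_pow] at h
          exact pow_eq_zero_iff hn.ne' |>.mp h
        haveI : CharP F p := (CharP.charP_iff_prime_eq_zero hp).mpr hpF
        haveI : CharP (AdjoinRoot f) p :=
          charP_of_injective_algebraMap (algebraMap F (AdjoinRoot f)).injective p
        have hNpos : 0 < q ^ e := Nat.pow_pos (by omega)
        have hrootN : AdjoinRoot.root f ^ q ^ e = AdjoinRoot.root f := by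
          have h1 : AdjoinRoot.root f ^ (q ^ e - 1) = 1 :=
            orderOf_dvd_iff_pow_eq_one.mp hedvd
          calc AdjoinRoot.root f ^ q ^ e
              = AdjoinRoot.root f ^ (q ^ e - 1) * AdjoinRoot.root f := by
                rw [← pow_succ]; congr 1; omega
            _ = AdjoinRoot.root f := by rw [h1, one_mul]
        have key : ∀ x : AdjoinRoot f, x ^ q ^ e = x := by
          intro x
          have hx : x ∈ Algebra.adjoin F {AdjoinRoot.root f} := by
            rw [AdjoinRoot.adjoinRoot_eq_top]; trivial
          induction hx using Algebra.adjoin_induction with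
          | mem y hy => rw [Set.mem_singleton_iff.mp hy]; exact hrootN
          | algebraMap r =>
              rw [← map_pow]
              congr 1
              rw [← hF]
              exact FiniteField.pow_card_pow e r
          | add a b ha hb iha ihb =>
              have hqe : q ^ e = p ^ (n * e) := by rw [hq, ← Nat.pow_mul]
              rw [hqe, add_pow_char_pow, ← hqe, iha, ihb]
          | mul a b ha hb iha ihb => rw [mul_pow, iha, ihb]
        -- count roots of X^(q^e) - X
        have hq2 : 1 < q ^ e := Nat.one_lt_pow he.ne' hq1
        set P : Polynomial (AdjoinRoot f) := X ^ (q ^ e) - X with hP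
        have hdegP : P.natDegree = q ^ e := by
          rw [hP, Polynomial.natDegree_sub_eq_left_of_natDegree_lt, natDegree_X_pow]
          rw [natDegree_X, natDegree_X_pow]; omega
        have hPne : P ≠ 0 := fun h => by
          rw [h, Polynomial.natDegree_zero] at hdegP; omega
        have hsub : Finset.univ ⊆ P.roots.toFinset := fun x _ => by
          rw [Multiset.mem_toFinset, Polynomial.mem_roots']
          refine ⟨hPne, ?_⟩
          show Polynomial.eval x P = 0
          rw [hP, Polynomial.eval_sub, Polynomial.eval_pow, Polynomial.eval_X, key x,
            sub_self]
        have hle : Fintype.card (AdjoinRoot f) ≤ q ^ e := by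
          calc Fintype.card (AdjoinRoot f) = Finset.univ.card := (Finset.card_univ).symm
            _ ≤ P.roots.toFinset.card := Finset.card_le_card hsub
            _ ≤ Multiset.card P.roots := Multiset.toFinset_card_le _
            _ ≤ P.natDegree := P.card_roots'
            _ = q ^ e := hdegP
        rw [hcardA] at hle
        exact (Nat.pow_le_pow_iff_right hq1).mp hle
      · -- rank condition
        intro l hl0 hlm hldvd
        refine (hranki l).mpr (isUnit_iff_ne_zero.mpr ?_)
        refine sub_ne_zero.mpr fun h => ?_
        exact absurd (orderOf_le_of_pow_eq_one hl0 h) (by omega)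
    · rintro ⟨hpm, ⟨⟨hdpos', hddvd⟩, hmin⟩, hrank⟩
      classical
      have hfne : f ≠ 0 := hmonic.ne_zero
      obtain ⟨g₀, hg₀irr, hg₀dvd⟩ := WfDvdMonoid.exists_irreducible_factor
        (Polynomial.not_isUnit_of_natDegree_pos f hd) hfne
      set g := normalize g₀ with hg
      have hgmonic : g.Monic := Polynomial.monic_normalize hg₀irr.ne_zero
      have hgirr : Irreducible g := (associated_normalize g₀).irreducible hg₀irr
      have hgdvd : g ∣ f := (normalize_associated g₀).dvd.trans hg₀dvd
      obtain ⟨h, hfh⟩ := hgdvd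
      haveI : Fact (Irreducible g) := ⟨hgirr⟩
      haveI : Fintype (AdjoinRoot g) :=
        Module.fintypeOfFintype (AdjoinRoot.powerBasis' hgmonic).basis
      have hkpos : 0 < g.natDegree := hgirr.natDegree_pos
      have hcardK : Fintype.card (AdjoinRoot g) = q ^ g.natDegree := by
        rw [Module.card_fintype (AdjoinRoot.powerBasis' hgmonic).basis, hF, Fintype.card_fin]
        rfl
      have hev : Polynomial.eval₂ (algebraMap F (AdjoinRoot g)) (AdjoinRoot.root g) f = 0 := by
        rw [hfh, Polynomial.eval₂_mul]
        rw [AdjoinRoot.algebraMap_eq, AdjoinRoot.eval₂_root, zero_mul]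
      set π := AdjoinRoot.lift (algebraMap F (AdjoinRoot g)) (AdjoinRoot.root g) hev with hπ
      have hπroot : π (AdjoinRoot.root f) = AdjoinRoot.root g := AdjoinRoot.lift_root hev
      have hg0 : g.coeff 0 ≠ 0 := fun hg0 => hc0 (by
        rw [hfh, Polynomial.mul_coeff_zero, hg0, zero_mul])
      have hβne : AdjoinRoot.root g ≠ 0 := by
        intro h0
        apply hg0
        have := AdjoinRoot.eval₂_root g
        rw [h0, Polynomial.eval₂_at_zero] at this
        have hinj : Function.Injective (AdjoinRoot.of g) := by
          rw [← AdjoinRoot.algebraMap_eq]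
          exact (algebraMap F (AdjoinRoot g)).injective
        exact hinj (by rw [this, map_zero])
      have hβm : AdjoinRoot.root g ^ orderOf (AdjoinRoot.root f) = 1 := by
        rw [← hπroot, ← map_pow, pow_orderOf_eq_one, _root_.map_one]
      have hβfin : IsOfFinOrder (AdjoinRoot.root g) := by
        refine isOfFinOrder_iff_pow_eq_one.mpr
          ⟨Fintype.card (AdjoinRoot g) - 1, ?_, FiniteField.pow_card_sub_one_eq_one _ hβne⟩
        have := Fintype.one_lt_card (α := AdjoinRoot g)
        omega
      have hlpos : 0 < orderOf (AdjoinRoot.root g) := orderOf_pos_iff.mpr hβfin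
      have hldvd : orderOf (AdjoinRoot.root g) ∣ orderOf (AdjoinRoot.root f) :=
        orderOf_dvd_of_pow_eq_one hβm
      have hlm : orderOf (AdjoinRoot.root g) = orderOf (AdjoinRoot.root f) := by
        by_contra hne
        have hlt : orderOf (AdjoinRoot.root g) < orderOf (AdjoinRoot.root f) :=
          lt_of_le_of_ne (Nat.le_of_dvd hmpos hldvd) hne
        have hunit := (hranki _).mp (hrank _ hlpos hlt hldvd)
        have h0 : π (AdjoinRoot.root f ^ orderOf (AdjoinRoot.root g) - 1) = 0 := by
          rw [map_sub, map_pow, hπroot, _root_.map_one, pow_orderOf_eq_one, sub_self]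
        exact (hunit.map π).ne_zero h0
      have hmdvd : orderOf (AdjoinRoot.root f) ∣ q ^ g.natDegree - 1 := by
        rw [← hlm]
        apply orderOf_dvd_of_pow_eq_one
        rw [← hcardK]
        exact FiniteField.pow_card_sub_one_eq_one _ hβne
      have hdk : f.natDegree ≤ g.natDegree := hmin ⟨hkpos, hmdvd⟩
      have hkd : g.natDegree ≤ f.natDegree := Polynomial.natDegree_le_of_dvd ⟨h, hfh⟩ hfne
      have hhne : h ≠ 0 := fun h0 => hfne (by rw [hfh, h0, mul_zero])
      have hgne : g ≠ 0 := hgmonic.ne_zero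
      have hnh : h.natDegree = 0 := by
        have := Polynomial.natDegree_mul hgne hhne
        rw [← hfh] at this
        omega
      have hhC : h = Polynomial.C (h.coeff 0) := Polynomial.eq_C_of_natDegree_eq_zero hnh
      have hlc : h.coeff 0 = 1 := by
        have h1 : f.leadingCoeff = g.leadingCoeff * h.leadingCoeff :=
          by rw [hfh, Polynomial.leadingCoeff_mul]
        rw [hmonic.leadingCoeff, hgmonic.leadingCoeff, one_mul] at h1
        rw [Polynomial.leadingCoeff, hnh] at h1
        exact h1.symm
      have : f = g := by rw [hfh, hhC, hlc, _root_.map_one, mul_one]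
      rw [this]
      exact hgirr
end

section
/- Let A be a d×d matrix over the finite field F_q whose characteristic polynomial is irreducible over F_q, and let l be a positive integer. Then there exists a monic irreducible polynomial g(t) over F_q and a positive integer s with s·deg(g) = d such that the characteristic polynomial of A^l equals g(t)^s. -/
open Polynomial Matrix

lemma eval_charpoly' {n : Type*} [DecidableEq n] [Fintype n] {R : Type*} [CommRing R]
    (M : Matrix n n R) (μ : R) :
    (Matrix.charpoly M).eval μ = (Matrix.scalar n μ - M).det := by
  rw [Matrix.charpoly, _root_.eval_det, matPolyEquiv_charmatrix]
  simp

lemma root_charpoly_isRoot_minpoly {n : Type*} [DecidableEq n] [Fintype n]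
    {K : Type*} [Field K] (M : Matrix n n K) {μ : K}
    (h : (Matrix.charpoly M).IsRoot μ) : (minpoly K M).IsRoot μ := by
  have hdet : (Matrix.scalar n μ - M).det = 0 := by
    rw [← eval_charpoly' M μ]; exact h
  have hspec : μ ∈ spectrum K M := by
    rw [spectrum.mem_iff]
    intro hu
    rw [Matrix.isUnit_iff_isUnit_det] at hu
    rw [show (algebraMap K (Matrix n n K)) μ = Matrix.scalar n μ from rfl] at hu
    rw [hdet] at hu
    exact hu.ne_zero rfl
  have hspec' : μ ∈ spectrum K (Matrix.toLin' M) := by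
    rwa [← AlgEquiv.spectrum_eq (Matrix.toLinAlgEquiv' : Matrix n n K ≃ₐ[K] _) M] at hspec
  have hev : Module.End.HasEigenvalue (Matrix.toLin' M) μ :=
    Module.End.hasEigenvalue_iff_mem_spectrum.mpr hspec'
  have := Module.End.hasEigenvalue_iff_isRoot.mp hev
  rwa [Matrix.minpoly_toLin'] at this

lemma multiset_prod_X_sub_C_dvd_pow {K : Type*} [CommRing K] (q : K[X])
    (s : Multiset K) (h : ∀ μ ∈ s, q.IsRoot μ) :
    (s.map (fun μ => X - Polynomial.C μ)).prod ∣ q ^ (Multiset.card s) := by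
  induction s using Multiset.induction with
  | empty => simp
  | cons a t ih =>
    simp only [Multiset.map_cons, Multiset.prod_cons, Multiset.card_cons, pow_succ']
    exact mul_dvd_mul (dvd_iff_isRoot.mpr (h a (Multiset.mem_cons_self a t)))
      (ih fun μ hμ => h μ (Multiset.mem_cons_of_mem hμ))

lemma charpoly_dvd_minpoly_pow {d : ℕ} {K : Type*} [Field K]
    (M : Matrix (Fin d) (Fin d) K) :
    Matrix.charpoly M ∣ (minpoly K M) ^ d := by
  set Ω := AlgebraicClosure K
  let ι := algebraMap K Ω
  set C := M.map ι with hC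
  have hmapc : C.charpoly = (Matrix.charpoly M).map ι := Matrix.charpoly_map M ι
  have hmindvd : minpoly Ω C ∣ (minpoly K M).map ι := by
    apply minpoly.dvd
    rw [Polynomial.aeval_map_algebraMap]
    have : C = (AlgHom.mapMatrix (Algebra.ofId K Ω)) M := rfl
    rw [this, Polynomial.aeval_algHom_apply, minpoly.aeval, map_zero]
  have hsplit : (C.charpoly).Splits := IsAlgClosed.splits _
  have heq : C.charpoly = (C.charpoly.roots.map (fun μ => X - Polynomial.C μ)).prod :=
    hsplit.eq_prod_roots_of_monic (Matrix.charpoly_monic C)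
  have hcard : Multiset.card C.charpoly.roots ≤ d := by
    refine le_trans (Polynomial.card_roots' _) ?_
    rw [Matrix.charpoly_natDegree_eq_dim, Fintype.card_fin]
  have hdvd1 : C.charpoly ∣ (minpoly Ω C) ^ d := by
    rw [heq]
    refine dvd_trans (multiset_prod_X_sub_C_dvd_pow _ _ ?_) (pow_dvd_pow _ hcard)
    intro μ hμ
    have hroot : (C.charpoly).IsRoot μ := Polynomial.isRoot_of_mem_roots hμ
    exact root_charpoly_isRoot_minpoly C hroot
  have hdvd2 : (Matrix.charpoly M).map ι ∣ ((minpoly K M) ^ d).map ι := by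
    rw [Polynomial.map_pow]
    exact dvd_trans (hmapc ▸ hdvd1) (pow_dvd_pow_of_dvd hmindvd d)
  exact (Polynomial.map_dvd_map ι (algebraMap K Ω).injective (Matrix.charpoly_monic M)).mp hdvd2
/-- Let A be a d×d matrix over F_q whose characteristic polynomial is
irreducible over F_q, and let l be a positive integer.  Then there is a monic
irreducible polynomial g over F_q and a positive integer s with s·deg(g) = d such
that the characteristic polynomial of A^l equals g^s. -/
theorem charpoly_pow_eq_irreducible_pow
    (F : Type) [Field F] [Fintype F] (d : ℕ)
    (A : Matrix (Fin d) (Fin d) F)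
    (hirr : Irreducible (Matrix.charpoly A))
    (l : ℕ) (hl : 0 < l) :
    ∃ (g : Polynomial F) (s : ℕ), g.Monic ∧ Irreducible g ∧ 0 < s ∧
      s * g.natDegree = d ∧ Matrix.charpoly (A ^ l) = g ^ s := by
  classical
  have hdeg : (Matrix.charpoly A).natDegree = d := by
    rw [Matrix.charpoly_natDegree_eq_dim, Fintype.card_fin]
  have hd : 0 < d := by
    rcases Nat.eq_zero_or_pos d with h0 | h
    · exfalso
      apply hirr.not_isUnit
      have : Matrix.charpoly A = 1 :=
        (Matrix.charpoly_monic A).natDegree_eq_zero.mp (by rw [hdeg, h0])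
      rw [this]; exact isUnit_one
    · exact h
  -- the field K = F[X]/(charpoly A)
  haveI : Fact (Irreducible (Matrix.charpoly A)) := ⟨hirr⟩
  have hne : Matrix.charpoly A ≠ 0 := (Matrix.charpoly_monic A).ne_zero
  haveI : Module.Finite F (AdjoinRoot (Matrix.charpoly A)) :=
    (AdjoinRoot.powerBasis hne).finite
  set α := AdjoinRoot.root (Matrix.charpoly A) with hα
  have hint : IsIntegral F (α ^ l) := Algebra.IsIntegral.isIntegral _
  set g := minpoly F (α ^ l) with hg
  have hgirr : Irreducible g := minpoly.irreducible hint
  have hgmonic : g.Monic := minpoly.monic hint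
  -- g annihilates A ^ l
  have hq : Polynomial.aeval α ((Polynomial.aeval (Polynomial.X ^ l : Polynomial F)) g) = 0 := by
    have := Polynomial.aeval_algHom_apply (Polynomial.aeval α) ((Polynomial.X : Polynomial F) ^ l) g
    rw [map_pow, Polynomial.aeval_X] at this
    rw [this.symm, minpoly.aeval]
  have hdvdq : Matrix.charpoly A ∣ (Polynomial.aeval (Polynomial.X ^ l : Polynomial F)) g := by
    have h4 : minpoly F α = Matrix.charpoly A := by
      rw [hα, AdjoinRoot.minpoly_root hne, (Matrix.charpoly_monic A).leadingCoeff]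
      simp
    rw [← h4]
    exact minpoly.dvd F α hq
  have hann : Polynomial.aeval (A ^ l) g = 0 := by
    have h5 := Polynomial.aeval_algHom_apply (Polynomial.aeval A) ((Polynomial.X : Polynomial F) ^ l) g
    rw [map_pow, Polynomial.aeval_X] at h5
    rw [h5]
    obtain ⟨c, hc⟩ := hdvdq
    rw [hc, _root_.map_mul, Matrix.aeval_self_charpoly, zero_mul]
  -- conclude
  have hmdvd : minpoly F (A ^ l) ∣ g := minpoly.dvd F (A ^ l) hann
  have hdvd : Matrix.charpoly (A ^ l) ∣ g ^ d :=
    dvd_trans (charpoly_dvd_minpoly_pow (A ^ l)) (pow_dvd_pow_of_dvd hmdvd d)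
  have hgprime : Prime g := hgirr.prime
  obtain ⟨s, hs_le, hassoc⟩ := (dvd_prime_pow hgprime d).mp hdvd
  have hcp : Matrix.charpoly (A ^ l) = g ^ s :=
    Polynomial.eq_of_monic_of_associated (Matrix.charpoly_monic _) (hgmonic.pow s) hassoc
  have hdeg2 : (Matrix.charpoly (A ^ l)).natDegree = d := by
    rw [Matrix.charpoly_natDegree_eq_dim, Fintype.card_fin]
  have hsd : s * g.natDegree = d := by
    rw [← hdeg2, hcp, Polynomial.natDegree_pow]
  have hs : 0 < s := by
    rcases Nat.eq_zero_or_pos s with h0 | h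
    · subst h0; rw [zero_mul] at hsd; omega
    · exact h
  exact ⟨g, s, hgmonic, hgirr, hs, hsd, hcp⟩
end
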